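/- arXiv:2101.11281 — 6 statements merged into one kernel-verified Lean document; each statement's English description precedes it below -/
import Mathlib

section
/- Let ρ > 0 and 0 < p₁⁰ < 2, and set τ̂₁ = (1/ρ)·log(2/(2−p₁⁰)). Let x₂, p₂ : ℝ → ℝ be differentiable functions satisfying x₂'(t) = 1 − ρ·x₂(t) with x₂(0) = 0, and p₂'(t) = ρ·p₂(t) − p₁⁰ + 1 with p₂(0) = (p₁⁰)²/(4ρ). Then: (i) x₂(t) = (1 − e^{−ρt})/ρ for all t, so x₂(t) > 0 for t > 0; (ii) p₂(t) − x₂(t) = (e^{−ρt}/(4ρ))·(e^{ρt}(2−p₁⁰) − 2)² for every t; consequently p₂(t) − x₂(t) > 0 for all t ∈ [0, τ̂₁) and p₂(τ̂₁) − x₂(τ̂₁) = 0; (iii) p₂(t) + x₂(t) > 0 for all t ∈ [0, τ̂₁]; (iv) p₂(τ̂₁) = x₂(τ̂₁) = p₁⁰/(2ρ), so that p₁⁰ = ρ·(p₂(τ̂₁) + x₂(τ̂₁)). -/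
open Real

theorem stmt1 (ρ p₁0 : ℝ) (hρ : 0 < ρ) (hp₁0 : 0 < p₁0) (hp₁0' : p₁0 < 2)
    (τ₁ : ℝ) (hτ₁ : τ₁ = (1 / ρ) * Real.log (2 / (2 - p₁0)))
    (x₂ p₂ : ℝ → ℝ)
    (hx : ∀ t : ℝ, HasDerivAt x₂ (1 - ρ * x₂ t) t) (hx0 : x₂ 0 = 0)
    (hp : ∀ t : ℝ, HasDerivAt p₂ (ρ * p₂ t - p₁0 + 1) t)
    (hp0 : p₂ 0 = p₁0 ^ 2 / (4 * ρ)) :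
    -- (i)
    (∀ t : ℝ, x₂ t = (1 - Real.exp (-ρ * t)) / ρ) ∧
    (∀ t : ℝ, 0 < t → 0 < x₂ t) ∧
    -- (ii)
    (∀ t : ℝ, p₂ t - x₂ t =
      (Real.exp (-ρ * t) / (4 * ρ)) * (Real.exp (ρ * t) * (2 - p₁0) - 2) ^ 2) ∧
    (∀ t ∈ Set.Ico (0 : ℝ) τ₁, 0 < p₂ t - x₂ t) ∧
    (p₂ τ₁ - x₂ τ₁ = 0) ∧
    -- (iii)
    (∀ t ∈ Set.Icc (0 : ℝ) τ₁, 0 < p₂ t + x₂ t) ∧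
    -- (iv)
    (p₂ τ₁ = p₁0 / (2 * ρ)) ∧ (x₂ τ₁ = p₁0 / (2 * ρ)) ∧
    (p₁0 = ρ * (p₂ τ₁ + x₂ τ₁)) := by
  have hρ' : ρ ≠ 0 := ne_of_gt hρ
  have h2p : (0:ℝ) < 2 - p₁0 := by linarith
  have hE : Real.exp (ρ * τ₁) = 2 / (2 - p₁0) := by
    rw [hτ₁, show ρ * (1 / ρ * Real.log (2 / (2 - p₁0))) = Real.log (2 / (2 - p₁0)) by
      field_simp]
    exact Real.exp_log (by positivity)
  -- x₂ : exp(ρt) * (x₂ t - 1/ρ) is constant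
  have hfx : ∀ t : ℝ, HasDerivAt (fun t => Real.exp (ρ * t) * (x₂ t - 1 / ρ)) 0 t := by
    intro t
    have h1 : HasDerivAt (fun t => Real.exp (ρ * t)) (ρ * Real.exp (ρ * t)) t := by
      have := (Real.hasDerivAt_exp (ρ * t)).comp t ((hasDerivAt_id t).const_mul ρ)
      simpa [Function.comp_def, mul_comm] using this
    have h2 : HasDerivAt (fun t => x₂ t - 1 / ρ) (1 - ρ * x₂ t) t := (hx t).sub_const _
    have h3 := h1.mul h2
    refine h3.congr_deriv ?_
    have hr : ρ * (1 / ρ) = 1 := by field_simp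
    linear_combination (-Real.exp (ρ * t)) * hr
  have hcx : ∀ t : ℝ, Real.exp (ρ * t) * (x₂ t - 1 / ρ) = -(1 / ρ) := by
    intro t
    have := is_const_of_deriv_eq_zero (fun s => (hfx s).differentiableAt)
      (fun s => (hfx s).deriv) t 0
    simpa [hx0] using this
  have hxf : ∀ t : ℝ, x₂ t = (1 - Real.exp (-ρ * t)) / ρ := by
    intro t
    have h := hcx t
    have he : Real.exp (ρ * t) ≠ 0 := Real.exp_ne_zero _
    rw [show -ρ * t = -(ρ * t) by ring, Real.exp_neg]
    field_simp at h ⊢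
    nlinarith [h, Real.exp_pos (ρ * t)]
  -- p₂ : exp(-ρt) * (p₂ t - c) is constant, c = (p₁0-1)/ρ
  have hfp : ∀ t : ℝ, HasDerivAt
      (fun t => Real.exp (-(ρ * t)) * (p₂ t - (p₁0 - 1) / ρ)) 0 t := by
    intro t
    have h1 : HasDerivAt (fun t => Real.exp (-(ρ * t))) (-ρ * Real.exp (-(ρ * t))) t := by
      have := (Real.hasDerivAt_exp (-(ρ * t))).comp t
        (((hasDerivAt_id t).const_mul ρ).neg)
      simpa [Function.comp_def, Pi.neg_apply, mul_comm] using this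
    have h2 : HasDerivAt (fun t => p₂ t - (p₁0 - 1) / ρ) (ρ * p₂ t - p₁0 + 1) t :=
      (hp t).sub_const _
    have h3 := h1.mul h2
    refine h3.congr_deriv ?_
    have hr : ρ * ((p₁0 - 1) / ρ) = p₁0 - 1 := by field_simp
    linear_combination (Real.exp (-(ρ * t))) * hr
  have hcp : ∀ t : ℝ, Real.exp (-(ρ * t)) * (p₂ t - (p₁0 - 1) / ρ)
      = p₁0 ^ 2 / (4 * ρ) - (p₁0 - 1) / ρ := by
    intro t
    have := is_const_of_deriv_eq_zero (fun s => (hfp s).differentiableAt)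
      (fun s => (hfp s).deriv) t 0
    simpa [hp0] using this
  have hpf : ∀ t : ℝ, p₂ t = (p₁0 - 1) / ρ
      + Real.exp (ρ * t) * (p₁0 ^ 2 / (4 * ρ) - (p₁0 - 1) / ρ) := by
    intro t
    have h := hcp t
    have he : Real.exp (ρ * t) ≠ 0 := Real.exp_ne_zero _
    rw [Real.exp_neg] at h
    field_simp at h ⊢
    nlinarith [h, Real.exp_pos (ρ * t)]
  -- (ii) identity
  have hdiff : ∀ t : ℝ, p₂ t - x₂ t =
      (Real.exp (-ρ * t) / (4 * ρ)) * (Real.exp (ρ * t) * (2 - p₁0) - 2) ^ 2 := by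
    intro t
    have he : Real.exp (ρ * t) ≠ 0 := Real.exp_ne_zero _
    rw [hpf t, hxf t, show -ρ * t = -(ρ * t) by ring, Real.exp_neg]
    field_simp
    ring
  have hzero : Real.exp (ρ * τ₁) * (2 - p₁0) - 2 = 0 := by
    rw [hE]; field_simp; ring
  have hdτ : p₂ τ₁ - x₂ τ₁ = 0 := by
    rw [hdiff τ₁, hzero]; simp
  have hEneg : Real.exp (-ρ * τ₁) = (2 - p₁0) / 2 := by
    rw [show -ρ * τ₁ = -(ρ * τ₁) by ring, Real.exp_neg, hE]
    field_simp
  have hxτ : x₂ τ₁ = p₁0 / (2 * ρ) := by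
    rw [hxf τ₁, hEneg]; field_simp; ring
  have hpτ : p₂ τ₁ = p₁0 / (2 * ρ) := by linarith [hdτ, hxτ]
  have hxpos : ∀ t : ℝ, 0 < t → 0 < x₂ t := by
    intro t ht
    rw [hxf t]
    have h1 : Real.exp (-ρ * t) < 1 := by
      rw [Real.exp_lt_one_iff]; nlinarith
    have h2 : 0 < 1 - Real.exp (-ρ * t) := by linarith
    positivity
  have hxnn : ∀ t : ℝ, 0 ≤ t → 0 ≤ x₂ t := by
    intro t ht
    rcases eq_or_lt_of_le ht with h | h
    · rw [← h, hx0]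
    · exact le_of_lt (hxpos t h)
  have hdpos : ∀ t ∈ Set.Ico (0:ℝ) τ₁, 0 < p₂ t - x₂ t := by
    rintro t ⟨ht0, htτ⟩
    rw [hdiff t]
    have hlt : Real.exp (ρ * t) < Real.exp (ρ * τ₁) :=
      Real.exp_lt_exp.mpr (by nlinarith)
    rw [hE] at hlt
    have hlt2 : Real.exp (ρ * t) * (2 - p₁0) < 2 := by
      have := (lt_div_iff₀ h2p).mp hlt
      linarith
    have hne : Real.exp (ρ * t) * (2 - p₁0) - 2 ≠ 0 := ne_of_lt (by linarith)
    positivity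
  refine ⟨hxf, hxpos, hdiff, hdpos, hdτ, ?_, hpτ, hxτ, by rw [hxτ, hpτ]; field_simp; ring⟩
  rintro t ⟨ht0, htτ⟩
  rcases eq_or_lt_of_le htτ with h | h
  · rw [h, hxτ, hpτ]
    have : (0:ℝ) < p₁0 / (2 * ρ) := by positivity
    linarith
  · have h1 := hdpos t ⟨ht0, h⟩
    have h2 := hxnn t ht0
    linarith
end

section
/- Let ρ > 0, p₁⁰ > 0, τ̂₂ ∈ ℝ, and set τ̂₃ = τ̂₂ + (1/ρ)·log(1+√2). Let x₂, p₂ : ℝ → ℝ be differentiable functions satisfying x₂'(t) = −ρ·x₂(t) and p₂'(t) = ρ·p₂(t) − p₁⁰, with x₂(τ̂₂) = p₂(τ̂₂) = p₁⁰/(2ρ). Then for every t: p₂(t) + x₂(t) = (p₁⁰/(2ρ))·(−e^{ρ(t−τ̂₂)} + 2 + e^{−ρ(t−τ̂₂)}) and p₂(t) − x₂(t) = (p₁⁰/(2ρ))·(−e^{ρ(t−τ̂₂)} + 2 − e^{−ρ(t−τ̂₂)}). Consequently: x₂(t) > 0 for all t; p₂(t) − x₂(t) < 0 < p₂(t) +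 x₂(t) for all t ∈ (τ̂₂, τ̂₃); and p₂(τ̂₃) + x₂(τ̂₃) = 0. -/
open Real

theorem stmt2 (ρ p₁0 τ₂ : ℝ) (hρ : 0 < ρ) (hp₁0 : 0 < p₁0)
    (τ₃ : ℝ) (hτ₃ : τ₃ = τ₂ + (1 / ρ) * Real.log (1 + Real.sqrt 2))
    (x₂ p₂ : ℝ → ℝ)
    (hx : ∀ t : ℝ, HasDerivAt x₂ (-ρ * x₂ t) t)
    (hp : ∀ t : ℝ, HasDerivAt p₂ (ρ * p₂ t - p₁0) t)
    (hx2 : x₂ τ₂ = p₁0 / (2 * ρ)) (hp2 : p₂ τ₂ = p₁0 / (2 * ρ)) :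
    (∀ t : ℝ, p₂ t + x₂ t =
      (p₁0 / (2 * ρ)) * (-Real.exp (ρ * (t - τ₂)) + 2 + Real.exp (-ρ * (t - τ₂)))) ∧
    (∀ t : ℝ, p₂ t - x₂ t =
      (p₁0 / (2 * ρ)) * (-Real.exp (ρ * (t - τ₂)) + 2 - Real.exp (-ρ * (t - τ₂)))) ∧
    (∀ t : ℝ, 0 < x₂ t) ∧
    (∀ t ∈ Set.Ioo τ₂ τ₃, p₂ t - x₂ t < 0 ∧ 0 < p₂ t + x₂ t) ∧
    (p₂ τ₃ + x₂ τ₃ = 0) := by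
  have hρ0 : ρ ≠ 0 := ne_of_gt hρ
  set c := p₁0 / (2 * ρ) with hc
  have hc0 : 0 < c := div_pos hp₁0 (by linarith)
  have hde : ∀ s : ℝ, HasDerivAt (fun u : ℝ => Real.exp (ρ * u)) (Real.exp (ρ * s) * ρ) s := by
    intro s
    have h1 : HasDerivAt (fun u : ℝ => ρ * u) ρ s := by
      simpa using (hasDerivAt_id s).const_mul ρ
    exact h1.exp
  have hdne : ∀ s : ℝ, HasDerivAt (fun u : ℝ => Real.exp (-ρ * u)) (Real.exp (-ρ * s) * (-ρ)) s := by
    intro s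
    have h1 : HasDerivAt (fun u : ℝ => -ρ * u) (-ρ) s := by
      simpa using (hasDerivAt_id s).const_mul (-ρ)
    exact h1.exp
  -- x₂ formula
  have hxf : ∀ t, x₂ t = c * Real.exp (-ρ * (t - τ₂)) := by
    have hg : ∀ s : ℝ, HasDerivAt (fun u => x₂ u * Real.exp (ρ * u)) 0 s := by
      intro s
      have : HasDerivAt (fun u => x₂ u * Real.exp (ρ * u))
        (-ρ * x₂ s * Real.exp (ρ * s) + x₂ s * (Real.exp (ρ * s) * ρ)) s := (hx s).fun_mul (hde s)
      convert this using 1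
      ring
    have hconst : ∀ t, x₂ t * Real.exp (ρ * t) = x₂ τ₂ * Real.exp (ρ * τ₂) := by
      intro t
      exact is_const_of_deriv_eq_zero (fun s => (hg s).differentiableAt)
        (fun s => (hg s).deriv) t τ₂
    intro t
    have h := hconst t
    rw [hx2] at h
    have he : Real.exp (ρ * t) ≠ 0 := Real.exp_ne_zero _
    have key : Real.exp (-ρ * (t - τ₂)) * Real.exp (ρ * t) = Real.exp (ρ * τ₂) := by
      rw [← Real.exp_add]; ring_nf
    refine mul_right_cancel₀ he ?_
    calc x₂ t * Real.exp (ρ * t) = c * Real.exp (ρ * τ₂) := h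
    _ = c * (Real.exp (-ρ * (t - τ₂)) * Real.exp (ρ * t)) := by rw [key]
    _ = c * Real.exp (-ρ * (t - τ₂)) * Real.exp (ρ * t) := by ring
  -- p₂ formula
  have h2c : p₁0 / ρ = 2 * c := by rw [hc]; field_simp
  have hpf : ∀ t, p₂ t = 2 * c - c * Real.exp (ρ * (t - τ₂)) := by
    have hg : ∀ s : ℝ, HasDerivAt (fun u => (p₂ u - p₁0 / ρ) * Real.exp (-ρ * u)) 0 s := by
      intro s
      have h1 : HasDerivAt (fun u => p₂ u - p₁0 / ρ) (ρ * p₂ s - p₁0) s := (hp s).sub_const _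
      have : HasDerivAt (fun u => (p₂ u - p₁0 / ρ) * Real.exp (-ρ * u))
        ((ρ * p₂ s - p₁0) * Real.exp (-ρ * s) + (p₂ s - p₁0 / ρ) * (Real.exp (-ρ * s) * -ρ)) s :=
        h1.fun_mul (hdne s)
      convert this using 1
      field_simp
      ring
    have hconst : ∀ t, (p₂ t - p₁0 / ρ) * Real.exp (-ρ * t)
        = (p₂ τ₂ - p₁0 / ρ) * Real.exp (-ρ * τ₂) := by
      intro t
      exact is_const_of_deriv_eq_zero (fun s => (hg s).differentiableAt)
        (fun s => (hg s).deriv) t τ₂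
    intro t
    have h := hconst t
    rw [hp2, h2c] at h
    have key : Real.exp (ρ * (t - τ₂)) * Real.exp (-ρ * t) = Real.exp (-ρ * τ₂) := by
      rw [← Real.exp_add]; ring_nf
    have he : Real.exp (-ρ * t) ≠ 0 := Real.exp_ne_zero _
    have h' : p₂ t - 2 * c = (c - 2 * c) * Real.exp (ρ * (t - τ₂)) := by
      refine mul_right_cancel₀ he ?_
      calc (p₂ t - 2 * c) * Real.exp (-ρ * t) = (c - 2 * c) * Real.exp (-ρ * τ₂) := h
      _ = (c - 2 * c) * (Real.exp (ρ * (t - τ₂)) * Real.exp (-ρ * t)) := by rw [key]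
      _ = (c - 2 * c) * Real.exp (ρ * (t - τ₂)) * Real.exp (-ρ * t) := by ring
    linarith [h']
  have hsum : ∀ t : ℝ, p₂ t + x₂ t =
      c * (-Real.exp (ρ * (t - τ₂)) + 2 + Real.exp (-ρ * (t - τ₂))) := by
    intro t; rw [hpf t, hxf t]; ring
  have hdiff : ∀ t : ℝ, p₂ t - x₂ t =
      c * (-Real.exp (ρ * (t - τ₂)) + 2 - Real.exp (-ρ * (t - τ₂))) := by
    intro t; rw [hpf t, hxf t]; ring
  have hs2 : Real.sqrt 2 ^ 2 = 2 := Real.sq_sqrt (by norm_num)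
  have hs2pos : 0 < Real.sqrt 2 := Real.sqrt_pos.mpr (by norm_num)
  have hτ3 : ρ * (τ₃ - τ₂) = Real.log (1 + Real.sqrt 2) := by
    rw [hτ₃]; field_simp; ring
  have hyτ3 : Real.exp (ρ * (τ₃ - τ₂)) = 1 + Real.sqrt 2 := by
    rw [hτ3]; exact Real.exp_log (by linarith)
  refine ⟨hsum, hdiff, ?_, ?_, ?_⟩
  · intro t; rw [hxf t]; positivity
  · rintro t ⟨ht1, ht2⟩
    set y := Real.exp (ρ * (t - τ₂)) with hy
    have hy1 : 1 < y := by
      rw [hy, show (1:ℝ) = Real.exp 0 from (Real.exp_zero).symm]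
      exact Real.exp_lt_exp.mpr (by nlinarith)
    have hy2 : y < 1 + Real.sqrt 2 := by
      rw [hy, ← hyτ3]
      exact Real.exp_lt_exp.mpr (by nlinarith)
    have hypos : 0 < y := lt_trans one_pos hy1
    have hyinv : Real.exp (-ρ * (t - τ₂)) = 1 / y := by
      rw [show -ρ * (t - τ₂) = -(ρ * (t - τ₂)) by ring, Real.exp_neg, one_div]
    constructor
    · rw [hdiff t, hyinv]
      have hsq : 0 < (y - 1) ^ 2 := pow_pos (by linarith) 2
      have hm : y * (-y + 2 - 1 / y) = -(y - 1) ^ 2 := by field_simp; ring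
      have hexpr : -y + 2 - 1 / y < 0 := by nlinarith [hm, hsq, hypos]
      exact mul_neg_of_pos_of_neg hc0 hexpr
    · rw [hsum t, hyinv]
      have hsq : (y - 1) ^ 2 < 2 := by nlinarith [hs2]
      have hm : y * (-y + 2 + 1 / y) = 2 - (y - 1) ^ 2 := by field_simp; ring
      have hexpr : 0 < -y + 2 + 1 / y := by nlinarith [hm, hsq, hypos]
      exact mul_pos hc0 hexpr
  · rw [hsum τ₃, hyτ3]
    have h1 : (1 : ℝ) + Real.sqrt 2 ≠ 0 := by positivity
    have hyinv : Real.exp (-ρ * (τ₃ - τ₂)) = Real.sqrt 2 - 1 := by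
      rw [show -ρ * (τ₃ - τ₂) = -(ρ * (τ₃ - τ₂)) by ring, Real.exp_neg, hyτ3]
      field_simp
      linear_combination -hs2
    rw [hyinv]
    ring
end

section
/- Let ρ > 0 and 0 < p₁⁰ < 2, let τ̂₃ ∈ ℝ, and set T = τ̂₃ + (1/ρ)·log(1 + (√2−1)·p₁⁰/2). Let x₂, p₂ : ℝ → ℝ be differentiable functions satisfying x₂'(t) = −1 − ρ·x₂(t) and p₂'(t) = ρ·p₂(t) − p₁⁰ + 1, with x₂(τ̂₃) = (√2−1)·p₁⁰/(2ρ) and p₂(τ̂₃) = −x₂(τ̂₃). Then: (i) x₂(t) > 0 for t ∈ [τ̂₃, T) and x₂(T) = 0; (ii) p₂(τ̂₃) + x₂(τ̂₃) = 0 and p₂(t) + x₂(t) < 0 for every t ∈ (τ̂₃, T]. -/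
open Real

set_option maxHeartbeats 1000000

theorem stmt3 (ρ p₁0 τ₃ : ℝ) (hρ : 0 < ρ) (hp₁0 : 0 < p₁0) (hp₁0' : p₁0 < 2)
    (T : ℝ) (hT : T = τ₃ + (1 / ρ) * Real.log (1 + (Real.sqrt 2 - 1) * p₁0 / 2))
    (x₂ p₂ : ℝ → ℝ)
    (hx : ∀ t : ℝ, HasDerivAt x₂ (-1 - ρ * x₂ t) t)
    (hp : ∀ t : ℝ, HasDerivAt p₂ (ρ * p₂ t - p₁0 + 1) t)
    (hx3 : x₂ τ₃ = (Real.sqrt 2 - 1) * p₁0 / (2 * ρ))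
    (hp3 : p₂ τ₃ = -x₂ τ₃) :
    -- (i)
    (∀ t ∈ Set.Ico τ₃ T, 0 < x₂ t) ∧ (x₂ T = 0) ∧
    -- (ii)
    (p₂ τ₃ + x₂ τ₃ = 0) ∧ (∀ t ∈ Set.Ioc τ₃ T, p₂ t + x₂ t < 0) := by
  have hρ' : ρ ≠ 0 := ne_of_gt hρ
  set r2 : ℝ := Real.sqrt 2 with hr2
  have hs2 : r2 ^ 2 = 2 := Real.sq_sqrt (by norm_num)
  have h1r2 : (1 : ℝ) < r2 := by nlinarith [Real.sqrt_nonneg 2]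
  set q : ℝ := p₁0 with hq
  set k : ℝ := 1 + (r2 - 1) * q / 2 with hkdef
  have hk1 : 1 < k := by
    have : 0 < (r2 - 1) * q := mul_pos (by linarith) hp₁0
    simp only [hkdef]; linarith
  have hk0 : 0 < k := by linarith
  -- exp at T
  have hET : Real.exp (ρ * (T - τ₃)) = k := by
    rw [hT]
    have : ρ * (τ₃ + 1 / ρ * Real.log k - τ₃) = Real.log k := by
      field_simp
      ring
    rw [this, Real.exp_log hk0]
  -- E t
  set E : ℝ → ℝ := fun t => Real.exp (ρ * (t - τ₃)) with hE
  have hEpos : ∀ t, 0 < E t := fun t => Real.exp_pos _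
  have hEτ : E τ₃ = 1 := by simp [hE]
  -- derivative of E
  have hEderiv : ∀ t, HasDerivAt E (ρ * E t) t := by
    intro t
    have h1 : HasDerivAt (fun t : ℝ => ρ * (t - τ₃)) ρ t := by
      simpa using ((hasDerivAt_id t).sub_const τ₃).const_mul ρ
    simpa [hE, mul_comm] using h1.exp
  -- constancy of (x₂ + 1/ρ) * E
  have hconstF : ∀ t, (x₂ t + 1 / ρ) * E t = x₂ τ₃ + 1 / ρ := by
    have hd : ∀ t, HasDerivAt (fun s => (x₂ s + 1 / ρ) * E s) 0 t := by
      intro t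
      have h1 : HasDerivAt (fun s => x₂ s + 1 / ρ) (-1 - ρ * x₂ t) t :=
        (hx t).add_const _
      have := h1.mul (hEderiv t)
      refine this.congr_deriv ?_
      field_simp
      ring
    have hc := is_const_of_deriv_eq_zero
      (fun s => (hd s).differentiableAt) (fun s => (hd s).deriv)
    have := hc τ₃ -- ∀? no: hc : ∀ x y, f x = f y
    intro t
    have h := hc t τ₃
    simpa [hEτ] using h
  -- constancy of (p₂ - B) * E⁻¹ : instead show p₂ t - B = (p₂ τ₃ - B) * E t
  set B : ℝ := (q - 1) / ρ with hB
  have hconstG : ∀ t, (p₂ t - B) * Real.exp (-(ρ * (t - τ₃))) = p₂ τ₃ - B := by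
    have hd : ∀ t, HasDerivAt (fun s => (p₂ s - B) * Real.exp (-(ρ * (s - τ₃)))) 0 t := by
      intro t
      have h1 : HasDerivAt (fun s => p₂ s - B) (ρ * p₂ t - q + 1) t :=
        (hp t).sub_const _
      have h2 : HasDerivAt (fun s : ℝ => Real.exp (-(ρ * (s - τ₃))))
          (-ρ * Real.exp (-(ρ * (t - τ₃)))) t := by
        have h3 : HasDerivAt (fun s : ℝ => -(ρ * (s - τ₃))) (-ρ) t := by
          exact (((hasDerivAt_id t).sub_const τ₃).const_mul ρ).neg.congr_deriv (by ring)
        simpa [mul_comm] using h3.exp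
      have := h1.mul h2
      refine this.congr_deriv ?_
      rw [hB]
      field_simp
      ring
    have hc := is_const_of_deriv_eq_zero
      (fun s => (hd s).differentiableAt) (fun s => (hd s).deriv)
    intro t
    have h := hc t τ₃
    simpa using h
  have hpformula : ∀ t, p₂ t = (p₂ τ₃ - B) * E t + B := by
    intro t
    have h := hconstG t
    have hne : Real.exp (-(ρ * (t - τ₃))) ≠ 0 := (Real.exp_pos _).ne'
    have hmul : Real.exp (-(ρ * (t - τ₃))) * E t = 1 := by
      rw [hE]; rw [← Real.exp_add]; simp
    have := congrArg (fun z => z * E t) h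
    calc p₂ t = (p₂ t - B) * (Real.exp (-(ρ * (t - τ₃))) * E t) + B := by
                rw [hmul]; ring
      _ = (p₂ τ₃ - B) * E t + B := by rw [← mul_assoc, h]
  -- key algebraic facts
  have ha : x₂ τ₃ = (r2 - 1) * q / (2 * ρ) := hx3
  have hak : x₂ τ₃ + 1 / ρ = k / ρ := by
    rw [ha, hkdef]; field_simp; ring
  set α : ℝ := 1 - q - (r2 - 1) * q / 2 with hα
  set β : ℝ := q - 2 with hβ
  have hg1 : 2 * α + β < 0 := by
    have : 2 * α + β = -r2 * q := by rw [hα, hβ]; ring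
    rw [this]
    nlinarith
  have hgk : α * k + α + β < 0 := by
    rw [hα, hβ, hkdef]
    nlinarith [sq_nonneg q, hs2]
  -- x₂ t * (ρ * E t) = k - E t
  have hxE : ∀ t, x₂ t * (ρ * E t) = k - E t := by
    intro t
    have h := hconstF t
    rw [hak] at h
    field_simp at h
    linear_combination h
  -- product formula for p₂ + x₂
  have hprod : ∀ t, (p₂ t + x₂ t) * (ρ * E t) = (E t - 1) * (α * E t + α + β) := by
    intro t
    have hpt := hpformula t
    have hxt := hxE t
    rw [hp3, ha] at hpt
    rw [hkdef] at hxt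
    have hpt2 : ρ * p₂ t = (1 - q - (r2 - 1) * q / 2) * E t + (q - 1) := by
      rw [hpt, hB]
      field_simp
      ring
    rw [hα, hβ]
    linear_combination E t * hpt2 + hxt
  refine ⟨?_, ?_, by linarith [hp3], ?_⟩
  · -- x₂ > 0 on [τ₃, T)
    intro t ht
    have hEk : E t < k := by
      have h1 : Real.exp (ρ * (t - τ₃)) < Real.exp (ρ * (T - τ₃)) :=
        Real.exp_lt_exp.mpr (by nlinarith [ht.2])
      rw [hET] at h1
      exact h1
    have h := hxE t
    nlinarith [hEpos t, mul_pos hρ (hEpos t)]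
  · -- x₂ T = 0
    have hETk : E T = k := hET
    have h := hxE T
    rw [hETk] at h
    have h0 : x₂ T * (ρ * k) = 0 := by linarith
    rcases mul_eq_zero.mp h0 with h' | h'
    · exact h'
    · exact absurd h' (mul_pos hρ hk0).ne'
  · -- p₂ + x₂ < 0 on (τ₃, T]
    intro t ht
    have hE1 : 1 < E t := by
      have h0 : (0:ℝ) < ρ * (t - τ₃) := mul_pos hρ (by linarith [ht.1])
      calc (1:ℝ) = Real.exp 0 := by simp
        _ < Real.exp (ρ * (t - τ₃)) := Real.exp_lt_exp.mpr h0
        _ = E t := rfl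
    have hEk : E t ≤ k := by
      have h1 : Real.exp (ρ * (t - τ₃)) ≤ Real.exp (ρ * (T - τ₃)) :=
        Real.exp_le_exp.mpr (mul_le_mul_of_nonneg_left (by linarith [ht.2]) hρ.le)
      rw [hET] at h1
      exact h1
    have hg : α * E t + α + β < 0 := by
      have hkey : (k - 1) * (α * E t + α + β)
          = (k - E t) * (2 * α + β) + (E t - 1) * (α * k + α + β) := by ring
      have h1 : (k - E t) * (2 * α + β) ≤ 0 :=
        mul_nonpos_of_nonneg_of_nonpos (by linarith) (le_of_lt hg1)
      have h2 : (E t - 1) * (α * k + α + β) < 0 :=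
        mul_neg_of_pos_of_neg (by linarith) hgk
      nlinarith [hkey]
    have hRHS : (E t - 1) * (α * E t + α + β) < 0 :=
      mul_neg_of_pos_of_neg (by linarith) hg
    have h := hprod t
    nlinarith [mul_pos hρ (hEpos t)]
end

section
/- Let ρ > 0 and τ̂₁ < τ̂₂ be real numbers. Suppose z₁, z₂, p₁, p₂ : ℝ → ℝ are differentiable and, setting φ(t) = (ρp₂(t) − p₁(t))·e^{ρ(t−τ̂₁)} + ρz₂(t)·e^{−ρ(t−τ̂₁)}, satisfy for all t: p₁'(t) = 0, z₁'(t) = −(φ(t)/(2ρ))·e^{ρ(t−τ̂₁)}, z₂'(t) = (φ(t)/2)·e^{ρ(t−τ̂₁)}, p₂'(t) = −(φ(t)/2)·e^{−ρ(t−τ̂₁)}. Then: (a) the function t ↦ z₂(t)·e^{−ρ(t−τ̂₁)} is affine, i.e., there exist constants a, b with z₂(t) = (a + b(t−τ̂₁))·e^{ρ(t−τ̂₁)} for all t; (b) if moreover z₁(τ̂₁) = z₂(τ̂₁) = 0 and z₁(τ̂₂) = z₂(τ̂₂) = 0, then z₁ ≡ 0, z₂ ≡ 0 and φ ≡ 0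 on ℝ. -/
open Real

theorem stmt7 (ρ τ₁ τ₂ : ℝ) (hρ : 0 < ρ) (hτ : τ₁ < τ₂)
    (z₁ z₂ p₁ p₂ : ℝ → ℝ)
    (φ : ℝ → ℝ)
    (hφ : ∀ t : ℝ, φ t =
      (ρ * p₂ t - p₁ t) * Real.exp (ρ * (t - τ₁)) + ρ * z₂ t * Real.exp (-ρ * (t - τ₁)))
    (hp₁ : ∀ t : ℝ, HasDerivAt p₁ 0 t)
    (hz₁ : ∀ t : ℝ, HasDerivAt z₁ (-(φ t / (2 * ρ)) * Real.exp (ρ * (t - τ₁))) t)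
    (hz₂ : ∀ t : ℝ, HasDerivAt z₂ ((φ t / 2) * Real.exp (ρ * (t - τ₁))) t)
    (hp₂ : ∀ t : ℝ, HasDerivAt p₂ (-(φ t / 2) * Real.exp (-ρ * (t - τ₁))) t) :
    -- (a)
    (∃ a b : ℝ, ∀ t : ℝ, z₂ t = (a + b * (t - τ₁)) * Real.exp (ρ * (t - τ₁))) ∧
    -- (b)
    (z₁ τ₁ = 0 → z₂ τ₁ = 0 → z₁ τ₂ = 0 → z₂ τ₂ = 0 →
      ∀ t : ℝ, z₁ t = 0 ∧ z₂ t = 0 ∧ φ t = 0) := by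
  have hE : ∀ t : ℝ, HasDerivAt (fun s => Real.exp (ρ * (s - τ₁)))
      (ρ * Real.exp (ρ * (t - τ₁))) t := by
    intro t
    have h1 : HasDerivAt (fun s : ℝ => ρ * (s - τ₁)) ρ t := by
      simpa using ((hasDerivAt_id t).sub_const τ₁).const_mul ρ
    simpa [mul_comm] using h1.exp
  have hF : ∀ t : ℝ, HasDerivAt (fun s => Real.exp (-ρ * (s - τ₁)))
      (-ρ * Real.exp (-ρ * (t - τ₁))) t := by
    intro t
    have h1 : HasDerivAt (fun s : ℝ => -ρ * (s - τ₁)) (-ρ) t := by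
      simpa using ((hasDerivAt_id t).sub_const τ₁).const_mul (-ρ)
    simpa [mul_comm] using h1.exp
  have hEF : ∀ t : ℝ, Real.exp (ρ * (t - τ₁)) * Real.exp (-ρ * (t - τ₁)) = 1 := by
    intro t
    rw [← Real.exp_add]
    have : ρ * (t - τ₁) + -ρ * (t - τ₁) = 0 := by ring
    rw [this, Real.exp_zero]
  -- the auxiliary function w = g'
  set w : ℝ → ℝ := fun t =>
    (ρ * p₂ t - p₁ t) / 2 * Real.exp (ρ * (t - τ₁))
      - ρ / 2 * (z₂ t * Real.exp (-ρ * (t - τ₁))) with hw_def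
  have hw : ∀ t : ℝ, HasDerivAt w 0 t := by
    intro t
    have h1 : HasDerivAt (fun s => (ρ * p₂ s - p₁ s) / 2 * Real.exp (ρ * (s - τ₁)))
        ((ρ * (-(φ t / 2) * Real.exp (-ρ * (t - τ₁))) - 0) / 2 * Real.exp (ρ * (t - τ₁))
          + (ρ * p₂ t - p₁ t) / 2 * (ρ * Real.exp (ρ * (t - τ₁)))) t := by
      have : HasDerivAt (fun s => (ρ * p₂ s - p₁ s) / 2 * Real.exp (ρ * (s - τ₁))) _ t := ((((hp₂ t).const_mul ρ).sub (hp₁ t)).div_const 2).mul (hE t)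
      simpa using this
    have h2 : HasDerivAt (fun s => ρ / 2 * (z₂ s * Real.exp (-ρ * (s - τ₁))))
        (ρ / 2 * ((φ t / 2 * Real.exp (ρ * (t - τ₁))) * Real.exp (-ρ * (t - τ₁))
          + z₂ t * (-ρ * Real.exp (-ρ * (t - τ₁))))) t := by
      exact ((hz₂ t).mul (hF t)).const_mul (ρ / 2)
    have h3 : HasDerivAt (fun s => (ρ * p₂ s - p₁ s) / 2 * Real.exp (ρ * (s - τ₁))
        - ρ / 2 * (z₂ s * Real.exp (-ρ * (s - τ₁)))) _ t := h1.sub h2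
    convert h3 using 1
    have h4 := hφ t
    have h5 := hEF t
    set E := Real.exp (ρ * (t - τ₁))
    set F := Real.exp (-ρ * (t - τ₁))
    linear_combination (ρ / 2 * E * F) * h4
      + (ρ / 2 * ((ρ * p₂ t - p₁ t) * E + ρ * z₂ t * F)) * h5
  -- w is constant
  have hwdiff : Differentiable ℝ w := fun t => (hw t).differentiableAt
  have hwconst : ∀ t : ℝ, w t = w τ₁ :=
    fun t => is_const_of_deriv_eq_zero hwdiff (fun t => (hw t).deriv) t τ₁
  set b : ℝ := w τ₁ with hb_def
  -- g = z₂ * F has derivative w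
  have hg : ∀ t : ℝ, HasDerivAt (fun s => z₂ s * Real.exp (-ρ * (s - τ₁))) b t := by
    intro t
    have h1 : HasDerivAt (fun s => z₂ s * Real.exp (-ρ * (s - τ₁))) _ t := (hz₂ t).mul (hF t)
    convert h1 using 1
    rw [← hwconst t, hw_def]
    have h4 := hφ t
    have h5 := hEF t
    set E := Real.exp (ρ * (t - τ₁))
    set F := Real.exp (-ρ * (t - τ₁))
    linear_combination (-(E * F) / 2) * h4
      + (-(((ρ * p₂ t - p₁ t) * E + ρ * z₂ t * F)) / 2) * h5
  -- hence g is affine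
  have hG : ∀ t : ℝ, HasDerivAt (fun s => z₂ s * Real.exp (-ρ * (s - τ₁)) - b * s) 0 t := by
    intro t
    have : HasDerivAt (fun s => z₂ s * Real.exp (-ρ * (s - τ₁)) - b * s) _ t :=
      (hg t).sub ((hasDerivAt_id t).const_mul b)
    simpa using this
  have hGconst : ∀ t : ℝ,
      z₂ t * Real.exp (-ρ * (t - τ₁)) - b * t
        = z₂ τ₁ * Real.exp (-ρ * (τ₁ - τ₁)) - b * τ₁ :=
    fun t => is_const_of_deriv_eq_zero (fun s => (hG s).differentiableAt)
      (fun s => (hG s).deriv) t τ₁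
  set a : ℝ := z₂ τ₁ with ha_def
  have hgaff : ∀ t : ℝ, z₂ t * Real.exp (-ρ * (t - τ₁)) = a + b * (t - τ₁) := by
    intro t
    have h := hGconst t
    have hτ₁ : Real.exp (-ρ * (τ₁ - τ₁)) = 1 := by norm_num
    rw [hτ₁] at h
    linarith [h]
  have hz₂form : ∀ t : ℝ, z₂ t = (a + b * (t - τ₁)) * Real.exp (ρ * (t - τ₁)) := by
    intro t
    have h := hgaff t
    have h5 := hEF t
    set E := Real.exp (ρ * (t - τ₁))
    set F := Real.exp (-ρ * (t - τ₁))
    linear_combination E * h - z₂ t * h5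
  refine ⟨⟨a, b, hz₂form⟩, ?_⟩
  intro hz₁τ₁ hz₂τ₁ hz₁τ₂ hz₂τ₂
  -- a = 0
  have ha0 : a = 0 := hz₂τ₁
  -- b = 0
  have hb0 : b = 0 := by
    have h := hz₂form τ₂
    rw [hz₂τ₂, ha0] at h
    have hne : Real.exp (ρ * (τ₂ - τ₁)) ≠ 0 := (Real.exp_pos _).ne'
    have h2 : b * (τ₂ - τ₁) = 0 := by
      rcases mul_eq_zero.mp h.symm with h3 | h3
      · linarith [h3]
      · exact absurd h3 hne
    rcases mul_eq_zero.mp h2 with h3 | h3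
    · exact h3
    · exact absurd h3 (by linarith)
  have hz₂zero : ∀ t : ℝ, z₂ t = 0 := by
    intro t
    rw [hz₂form t, ha0, hb0]
    ring
  -- φ ≡ 0
  have hφzero : ∀ t : ℝ, φ t = 0 := by
    intro t
    have h0 : HasDerivAt z₂ 0 t := by
      have : z₂ = fun _ => (0 : ℝ) := funext hz₂zero
      rw [this]
      exact hasDerivAt_const t 0
    have h1 : (φ t / 2) * Real.exp (ρ * (t - τ₁)) = 0 := (hz₂ t).unique h0
    have hne : Real.exp (ρ * (t - τ₁)) ≠ 0 := (Real.exp_pos _).ne'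
    rcases mul_eq_zero.mp h1 with h2 | h2
    · linarith [h2]
    · exact absurd h2 hne
  -- z₁ ≡ 0
  have hz₁zero : ∀ t : ℝ, z₁ t = 0 := by
    have hz₁' : ∀ t : ℝ, HasDerivAt z₁ 0 t := by
      intro t
      have := hz₁ t
      rw [hφzero t] at this
      simpa using this
    intro t
    have := is_const_of_deriv_eq_zero (fun s => (hz₁' s).differentiableAt)
      (fun s => (hz₁' s).deriv) t τ₁
    rw [this, hz₁τ₁]
  exact fun t => ⟨hz₁zero t, hz₂zero t, hφzero t⟩
end

section
/- Let ρ > 0, τ̂₁ < τ̂₂, and ε ∈ ℝ. Suppose w : [τ̂₁, τ̂₂] → ℝ is differentiable and, setting ζ₂(t) = ε + ρ·∫_{τ̂₁}^{t} w(s)·e^{ρ(s−τ̂₁)} ds, satisfies for all t ∈ [τ̂₁, τ̂₂]: w'(t)·e^{−ρ(t−τ̂₁)} − ρ·w(t)·e^{−ρ(t−τ̂₁)} + ρ·ζ₂(t)·e^{−2ρ(t−τ̂₁)} = 0. Then w is an affine function: there exist constants c, d ∈ ℝ such that w(t) = c + d·(t − τ̂₁) for all t ∈ [τ̂₁, τ̂₂].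 -/
open Real

theorem stmt9 (ρ τ₁ τ₂ ε : ℝ) (hρ : 0 < ρ) (hτ : τ₁ < τ₂)
    (w w' : ℝ → ℝ)
    (hw : ∀ t ∈ Set.Icc τ₁ τ₂, HasDerivAt w (w' t) t)
    (ζ₂ : ℝ → ℝ)
    (hζ₂ : ∀ t : ℝ, ζ₂ t = ε + ρ * ∫ s in τ₁..t, w s * Real.exp (ρ * (s - τ₁)))
    (heq : ∀ t ∈ Set.Icc τ₁ τ₂,
      w' t * Real.exp (-ρ * (t - τ₁)) - ρ * w t * Real.exp (-ρ * (t - τ₁))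
        + ρ * ζ₂ t * Real.exp (-2 * ρ * (t - τ₁)) = 0) :
    ∃ c d : ℝ, ∀ t ∈ Set.Icc τ₁ τ₂, w t = c + d * (t - τ₁) := by
  set f : ℝ → ℝ := fun s => w s * Real.exp (ρ * (s - τ₁)) with hf
  have hτle : τ₁ ≤ τ₂ := hτ.le
  have hwc : ContinuousOn w (Set.Icc τ₁ τ₂) :=
    fun x hx => ((hw x hx).continuousAt).continuousWithinAt
  have hfc : ContinuousOn f (Set.Icc τ₁ τ₂) :=
    hwc.mul (Continuous.continuousOn (Real.continuous_exp.comp (by fun_prop)))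
  have hζfun : ζ₂ = fun t => ε + ρ * ∫ s in τ₁..t, f s := funext hζ₂
  -- key pointwise identity from heq
  have hkey : ∀ t ∈ Set.Icc τ₁ τ₂,
      w' t = ρ * w t - ρ * ζ₂ t * Real.exp (-ρ * (t - τ₁)) := by
    intro t ht
    have h := heq t ht
    have hE : Real.exp (-2 * ρ * (t - τ₁)) =
        Real.exp (-ρ * (t - τ₁)) * Real.exp (-ρ * (t - τ₁)) := by
      rw [← Real.exp_add]; ring_nf
    rw [hE] at h
    have hEpos : Real.exp (-ρ * (t - τ₁)) ≠ 0 := (Real.exp_pos _).ne'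
    have : (w' t - (ρ * w t - ρ * ζ₂ t * Real.exp (-ρ * (t - τ₁)))) *
        Real.exp (-ρ * (t - τ₁)) = 0 := by ring_nf; ring_nf at h; linarith
    have := mul_eq_zero.mp this
    rcases this with h' | h'
    · linarith
    · exact absurd h' hEpos
  -- derivative of ζ₂ within Ici x for x in Ico
  have hζd : ∀ x ∈ Set.Ico τ₁ τ₂, HasDerivWithinAt ζ₂ (ρ * f x) (Set.Ici x) x := by
    intro x hx
    rw [hζfun]
    have hxI : x ∈ Set.Icc τ₁ τ₂ := ⟨hx.1, hx.2.le⟩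
    have hint : IntervalIntegrable f MeasureTheory.volume τ₁ x := by
      apply ContinuousOn.intervalIntegrable
      apply hfc.mono
      rw [Set.uIcc_of_le hx.1]
      exact Set.Icc_subset_Icc le_rfl hx.2.le
    have hmeas : StronglyMeasurableAtFilter f (nhdsWithin x (Set.Ioi x)) := by
      refine ⟨Set.Ioc x τ₂, Ioc_mem_nhdsGT_of_mem ⟨le_rfl, hx.2⟩, ?_⟩
      exact ((hfc.mono (Set.Ioc_subset_Icc_self.trans
        (Set.Icc_subset_Icc hx.1 le_rfl))).aestronglyMeasurable measurableSet_Ioc)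
    have hcont : ContinuousWithinAt f (Set.Ioi x) x := by
      have : ContinuousAt f x :=
        ((hw x hxI).continuousAt).mul (Real.continuous_exp.comp (by fun_prop)).continuousAt
      exact this.continuousWithinAt
    have hd : HasDerivWithinAt (fun u => ∫ s in τ₁..u, f s) (f x) (Set.Ici x) x :=
      intervalIntegral.integral_hasDerivWithinAt_right hint hmeas hcont
    simpa using (hd.const_mul ρ).const_add ε
  -- derivative of F := ζ₂ * exp(-ρ(·-τ₁))
  set F : ℝ → ℝ := fun t => ζ₂ t * Real.exp (-ρ * (t - τ₁)) with hF
  have hFd : ∀ x ∈ Set.Ico τ₁ τ₂, HasDerivWithinAt F (w' x) (Set.Ici x) x := by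
    intro x hx
    have hxI : x ∈ Set.Icc τ₁ τ₂ := ⟨hx.1, hx.2.le⟩
    have he : HasDerivWithinAt (fun t => Real.exp (-ρ * (t - τ₁)))
        (Real.exp (-ρ * (x - τ₁)) * (-ρ)) (Set.Ici x) x := by
      have : HasDerivAt (fun t => Real.exp (-ρ * (t - τ₁)))
          (Real.exp (-ρ * (x - τ₁)) * (-ρ)) x := by
        have h1 : HasDerivAt (fun t : ℝ => -ρ * (t - τ₁)) (-ρ) x := by
          simpa using ((hasDerivAt_id x).sub_const τ₁).const_mul (-ρ)
        simpa using h1.exp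
      exact this.hasDerivWithinAt
    have := (hζd x hx).mul he
    have hval : ρ * f x * Real.exp (-ρ * (x - τ₁)) +
        ζ₂ x * (Real.exp (-ρ * (x - τ₁)) * (-ρ)) = w' x := by
      have hone : Real.exp (ρ * (x - τ₁)) * Real.exp (-ρ * (x - τ₁)) = 1 := by
        rw [← Real.exp_add]; ring_nf; exact Real.exp_zero
      rw [hkey x hxI]
      simp only [hf]
      linear_combination (ρ * w x) * hone
    rw [hval] at this
    exact this
  -- H := ρ (w - F) has zero derivative, hence constant
  set H : ℝ → ℝ := fun t => ρ * (w t - F t) with hH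
  have hζc : ContinuousOn ζ₂ (Set.Icc τ₁ τ₂) := by
    rw [hζfun]
    have hintOn : MeasureTheory.IntegrableOn f (Set.uIcc τ₁ τ₂) MeasureTheory.volume := by
      rw [Set.uIcc_of_le hτle]
      exact hfc.integrableOn_compact isCompact_Icc
    have := intervalIntegral.continuousOn_primitive_interval (a := τ₁) (b := τ₂) hintOn
    rw [Set.uIcc_of_le hτle] at this
    exact continuousOn_const.add (continuousOn_const.mul this)
  have hFc : ContinuousOn F (Set.Icc τ₁ τ₂) :=
    hζc.mul (Continuous.continuousOn (Real.continuous_exp.comp (by fun_prop)))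
  have hHc : ContinuousOn H (Set.Icc τ₁ τ₂) :=
    (continuousOn_const.mul (hwc.sub hFc))
  have hHd : ∀ x ∈ Set.Ico τ₁ τ₂, HasDerivWithinAt H 0 (Set.Ici x) x := by
    intro x hx
    have hxI : x ∈ Set.Icc τ₁ τ₂ := ⟨hx.1, hx.2.le⟩
    have := (((hw x hxI).hasDerivWithinAt (s := Set.Ici x)).sub (hFd x hx)).const_mul ρ
    simpa using this
  have hHconst := constant_of_has_deriv_right_zero hHc hHd
  set d : ℝ := H τ₁ with hd
  -- w' t = H t = d on Icc
  have hw'eq : ∀ t ∈ Set.Icc τ₁ τ₂, w' t = d := by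
    intro t ht
    rw [hkey t ht, ← hHconst t ht]
    simp only [hH, hF]
    ring
  -- K := w - d * id has zero derivative
  set K : ℝ → ℝ := fun t => w t - d * t with hK
  have hKc : ContinuousOn K (Set.Icc τ₁ τ₂) :=
    hwc.sub (Continuous.continuousOn (continuous_const.mul continuous_id))
  have hKd : ∀ x ∈ Set.Ico τ₁ τ₂, HasDerivWithinAt K 0 (Set.Ici x) x := by
    intro x hx
    have hxI : x ∈ Set.Icc τ₁ τ₂ := ⟨hx.1, hx.2.le⟩
    have h1 : HasDerivWithinAt (fun t => d * t) d (Set.Ici x) x := by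
      simpa using ((hasDerivAt_id x).const_mul d).hasDerivWithinAt
    have := ((hw x hxI).hasDerivWithinAt (s := Set.Ici x)).sub h1
    rw [hw'eq x hxI] at this
    rw [sub_self] at this; exact this
  have hKconst := constant_of_has_deriv_right_zero hKc hKd
  refine ⟨w τ₁, d, fun t ht => ?_⟩
  have := hKconst t ht
  simp only [hK] at this
  linarith [this]
end

section
/- Let ρ > 0, τ̂₁ < τ̂₂, set τ̂₃ = τ̂₂ + (1/ρ)·log(1+√2), and let û_S ∈ (0,1). For (ε, w) ∈ ℝ × L²([τ̂₁, τ̂₂]) define ζ₂(t) = ε + ρ·∫_{τ̂₁}^{t} w(s)·e^{ρ(s−τ̂₁)} ds and Q(ε, w) = ε²·(1 + √2·û_S) + ∫_{τ̂₁}^{τ̂₂} ( ρ·w(t)² − ρ·w(t)·ζ₂(t)·e^{−ρ(t−τ̂₁)} ) dt. Then there exists a constant c > 0 such that Q(ε, w) ≥ c·( ε² + ‖w‖²_{L²([τ̂₁,τ̂₂])} ) for every pair (ε, w) satisfying the constraint ∫_{τ̂₁}^{τ̂₂} w(s)·e^{ρ(s−τ̂₁)} ds = ε·(e^{ρ(τ̂₃−τ̂₁)}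 − 1)/ρ. -/
open Real MeasureTheory Set

lemma swap_tri {a b : ℝ} (hab : a ≤ b) {f g : ℝ → ℝ}
    (hf : IntegrableOn f (Set.Ioc a b))
    (hg : IntegrableOn g (Set.Ioc a b)) :
    ∫ t in a..b, g t * (∫ s in a..t, f s) = ∫ s in a..b, f s * (∫ t in s..b, g t) := by
  set μ := volume.restrict (Set.Ioc a b) with hμ
  have hFint : Integrable (fun p : ℝ × ℝ => if p.1 ≤ p.2 then f p.1 * g p.2 else 0) (μ.prod μ) := by
    have h1 : Integrable (fun p : ℝ × ℝ => f p.1 * g p.2) (μ.prod μ) := hf.mul_prod hg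
    have h2 : MeasurableSet {p : ℝ × ℝ | p.1 ≤ p.2} := measurableSet_le measurable_fst measurable_snd
    have := h1.indicator h2
    exact this.congr (Filter.Eventually.of_forall fun p => by simp [Set.indicator_apply])
  have key := MeasureTheory.integral_integral_swap
    (f := fun t s : ℝ => if s ≤ t then f s * g t else 0) (μ := μ) (ν := μ) hFint.swap
  have hL : ∫ t in a..b, g t * (∫ s in a..t, f s)
      = ∫ t, (∫ s, (if s ≤ t then f s * g t else 0) ∂μ) ∂μ := by
    rw [intervalIntegral.integral_of_le hab]
    refine setIntegral_congr_fun measurableSet_Ioc (fun t ht => ?_)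
    have h3 : (fun s => if s ≤ t then f s * g t else 0)
        = (Set.Iic t).indicator (fun s => f s * g t) := by
      ext s; simp [Set.indicator_apply]
    have h4 : Set.Iic t ∩ Set.Ioc a b = Set.Ioc a t := by
      ext x; simp only [Set.mem_inter_iff, Set.mem_Iic, Set.mem_Ioc]
      exact ⟨fun h => ⟨h.2.1, h.1⟩, fun h => ⟨h.2, h.1, h.2.trans ht.2⟩⟩
    rw [h3, integral_indicator measurableSet_Iic, hμ,
      Measure.restrict_restrict measurableSet_Iic, h4,
      integral_mul_const, intervalIntegral.integral_of_le ht.1.le, mul_comm]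
  have hR : ∫ s in a..b, f s * (∫ t in s..b, g t)
      = ∫ s, (∫ t, (if s ≤ t then f s * g t else 0) ∂μ) ∂μ := by
    rw [intervalIntegral.integral_of_le hab]
    refine setIntegral_congr_fun measurableSet_Ioc (fun s hs => ?_)
    have h3 : (fun t => if s ≤ t then f s * g t else 0)
        = (Set.Ici s).indicator (fun t => f s * g t) := by
      ext t; simp [Set.indicator_apply]
    have h4 : Set.Ici s ∩ Set.Ioc a b = Set.Icc s b := by
      ext x; simp only [Set.mem_inter_iff, Set.mem_Ici, Set.mem_Ioc, Set.mem_Icc]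
      exact ⟨fun h => ⟨h.1, h.2.2⟩, fun h => ⟨h.1, lt_of_lt_of_le hs.1 h.1, h.2⟩⟩
    rw [h3, integral_indicator measurableSet_Ici, hμ,
      Measure.restrict_restrict measurableSet_Ici, h4,
      integral_Icc_eq_integral_Ioc, integral_const_mul,
      intervalIntegral.integral_of_le hs.2]
  rw [hL, hR, key]

lemma int_exp_neg {ρ : ℝ} (hρ : ρ ≠ 0) (a r t : ℝ) :
    ∫ s in r..t, Real.exp (-ρ * (s - a)) =
      (Real.exp (-ρ * (r - a)) - Real.exp (-ρ * (t - a))) / ρ := by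
  have hd : ∀ x : ℝ, HasDerivAt (fun s => -Real.exp (-ρ * (s - a)) / ρ)
      (Real.exp (-ρ * (x - a))) x := by
    intro x
    have h1 : HasDerivAt (fun s : ℝ => -ρ * (s - a)) (-ρ) x := by
      simpa using ((hasDerivAt_id x).sub_const a).const_mul (-ρ)
    have h2 := h1.exp
    have h3 := (h2.div_const ρ).neg
    have h4 : (fun s => -Real.exp (-ρ * (s - a)) / ρ) = -fun x => Real.exp (-ρ * (x - a)) / ρ := by
      funext s; simp only [Pi.neg_apply]; ring
    rw [h4]
    exact h3.congr_deriv (by rw [mul_neg, neg_div, neg_neg, mul_div_assoc, div_self hρ, mul_one])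
  rw [intervalIntegral.integral_eq_sub_of_hasDerivAt (fun x _ => hd x)
      ((Real.continuous_exp.comp (by continuity)).intervalIntegrable r t)]
  ring

lemma cs_bound {S J L : ℝ} (hL : 0 < L) (hS : 0 ≤ S) (hJ : 0 ≤ J)
    (h : ∀ l : ℝ, 0 < l → J ≤ S / (2 * l) + l * L / 2) : J ^ 2 ≤ L * S := by
  rcases eq_or_lt_of_le hS with hS0 | hS0
  · have : J ≤ 0 := by
      refine le_of_forall_pos_le_add (fun δ hδ => ?_)
      have := h (2 * δ / L) (by positivity)
      rw [← hS0] at this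
      calc J ≤ 0 / (2 * (2 * δ / L)) + (2 * δ / L) * L / 2 := this
        _ = δ := by field_simp; ring
        _ ≤ 0 + δ := by linarith
    have : J = 0 := le_antisymm this hJ
    simp [this]
    positivity
  · set l := Real.sqrt (S / L) with hl
    have hl0 : 0 < l := Real.sqrt_pos.2 (by positivity)
    have hl2 : l ^ 2 = S / L := Real.sq_sqrt (by positivity)
    have h1 := h l hl0
    have h2 : 2 * l * J ≤ 2 * S := by
      have := mul_le_mul_of_nonneg_left h1 (le_of_lt (by positivity : (0:ℝ) < 2 * l))
      have hexp : 2 * l * (S / (2 * l) + l * L / 2) = S + l ^ 2 * L := by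
        field_simp
      rw [hexp] at this
      have : 2 * l * J ≤ S + (S / L) * L := by rw [← hl2]; linarith
      rw [div_mul_cancel₀ S (ne_of_gt hL)] at this
      linarith
    have h3 : l * J ≤ S := by linarith
    have h4 : (l * J) ^ 2 ≤ S ^ 2 := by nlinarith [mul_nonneg hl0.le hJ]
    have h5 : l ^ 2 * J ^ 2 ≤ S ^ 2 := by nlinarith
    rw [hl2] at h5
    rw [div_mul_eq_mul_div] at h5
    have h6 : S * J ^ 2 ≤ S ^ 2 * L := by
      rw [div_le_iff₀ hL] at h5; nlinarith
    nlinarith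

set_option maxHeartbeats 1000000 in
theorem stmt10 (ρ τ₁ τ₂ : ℝ) (hρ : 0 < ρ) (hτ : τ₁ < τ₂)
    (τ₃ : ℝ) (hτ₃ : τ₃ = τ₂ + (1 / ρ) * Real.log (1 + Real.sqrt 2))
    (uS : ℝ) (huS : uS ∈ Set.Ioo (0 : ℝ) 1) :
    ∃ c > 0, ∀ (ε : ℝ) (w : ℝ → ℝ),
      MemLp w 2 (volume.restrict (Set.Icc τ₁ τ₂)) →
      (∫ s in τ₁..τ₂, w s * Real.exp (ρ * (s - τ₁)))
          = ε * (Real.exp (ρ * (τ₃ - τ₁)) - 1) / ρ →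
      c * (ε ^ 2 + ∫ t in τ₁..τ₂, (w t) ^ 2) ≤
        ε ^ 2 * (1 + Real.sqrt 2 * uS) +
          ∫ t in τ₁..τ₂,
            (ρ * w t ^ 2 -
              ρ * w t *
                (ε + ρ * ∫ s in τ₁..t, w s * Real.exp (ρ * (s - τ₁))) *
                Real.exp (-ρ * (t - τ₁))) := by
  obtain ⟨huS0, huS1⟩ := huS
  have hab : τ₁ ≤ τ₂ := hτ.le
  have huc : Continuous fun s : ℝ => Real.exp (-ρ * (s - τ₁)) :=
    Real.continuous_exp.comp (continuous_const.mul (continuous_id.sub continuous_const))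
  have hEc : Continuous fun s : ℝ => Real.exp (ρ * (s - τ₁)) :=
    Real.continuous_exp.comp (continuous_const.mul (continuous_id.sub continuous_const))
  set L : ℝ := τ₂ - τ₁ with hLdef
  have hL0 : 0 < L := sub_pos.2 hτ
  refine ⟨min (2 / (1 + 4 * L)) (ρ / (2 + 4 * ρ ^ 2 * L ^ 2)),
    lt_min (by positivity) (by positivity), ?_⟩
  intro ε w hw hcon
  -- abbreviations
  obtain ⟨v, hv⟩ : ∃ v : ℝ → ℝ, v = fun t =>
      (ε + ρ * ∫ s in τ₁..t, w s * Real.exp (ρ * (s - τ₁))) * Real.exp (-ρ * (t - τ₁)) :=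
    ⟨_, rfl⟩
  obtain ⟨φ, hφ⟩ : ∃ φ : ℝ → ℝ, φ = fun t => w t - v t := ⟨_, rfl⟩
  obtain ⟨Φ, hΦdef⟩ : ∃ Φ : ℝ → ℝ, Φ = fun t => ∫ s in τ₁..t, φ s := ⟨_, rfl⟩
  -- basic integrability
  have hw2 : MemLp w 2 (volume.restrict (Set.Ioc τ₁ τ₂)) :=
    hw.mono_measure (Measure.restrict_mono Set.Ioc_subset_Icc_self le_rfl)
  have hwi : IntegrableOn w (Set.Ioc τ₁ τ₂) := hw2.integrable one_le_two
  have hw2i : IntegrableOn (fun t => w t ^ 2) (Set.Ioc τ₁ τ₂) := hw2.integrable_sq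
  have hEb : ∀ x ∈ Set.Ioc τ₁ τ₂, ‖Real.exp (ρ * (x - τ₁))‖ ≤ Real.exp (ρ * L) := by
    intro x hx
    rw [Real.norm_eq_abs, abs_of_pos (Real.exp_pos _)]
    exact Real.exp_le_exp.2 (by nlinarith [hx.1.le, hx.2])
  have hhi : IntegrableOn (fun s => w s * Real.exp (ρ * (s - τ₁))) (Set.Ioc τ₁ τ₂) := by
    have := hwi.bdd_mul (f := fun s => Real.exp (ρ * (s - τ₁)))
      hEc.aestronglyMeasurable
      ((ae_restrict_iff' measurableSet_Ioc).2 (Filter.Eventually.of_forall hEb))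
    exact this.congr (Filter.Eventually.of_forall (fun x => mul_comm _ _))
  have hhIcc : IntegrableOn (fun s => w s * Real.exp (ρ * (s - τ₁))) (Set.Icc τ₁ τ₂) := by
    rwa [integrableOn_Icc_iff_integrableOn_Ioc]
  -- continuity of the primitive H and of v
  have hHcont : ContinuousOn (fun t => ∫ s in τ₁..t, w s * Real.exp (ρ * (s - τ₁)))
      (Set.Icc τ₁ τ₂) := by
    have := intervalIntegral.continuousOn_primitive_interval (a := τ₁) (b := τ₂) (μ := volume)
      (f := fun s => w s * Real.exp (ρ * (s - τ₁))) (by rwa [Set.uIcc_of_le hab])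
    rwa [Set.uIcc_of_le hab] at this
  have hvcont : ContinuousOn v (Set.Icc τ₁ τ₂) := by
    rw [hv]
    apply ContinuousOn.mul
    · exact (continuousOn_const.add (continuousOn_const.mul hHcont))
    · exact huc.continuousOn
  have hvmeas : AEStronglyMeasurable v (volume.restrict (Set.Ioc τ₁ τ₂)) :=
    (hvcont.mono Set.Ioc_subset_Icc_self).aestronglyMeasurable measurableSet_Ioc
  -- crude bound for v on Ioc
  obtain ⟨Cv, hCv⟩ : ∃ C, ∀ x ∈ Set.Icc τ₁ τ₂, ‖v x‖ ≤ C := by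
    obtain ⟨m, -, hm⟩ := isCompact_Icc.exists_isMaxOn (s := Set.Icc τ₁ τ₂)
      ⟨τ₁, Set.left_mem_Icc.2 hab⟩ hvcont.norm
    exact ⟨‖v m‖, fun x hx => hm hx⟩
  have hvi : IntegrableOn v (Set.Ioc τ₁ τ₂) := by
    refine Integrable.mono' (integrable_const Cv) hvmeas ?_
    exact (ae_restrict_iff' measurableSet_Ioc).2
      (Filter.Eventually.of_forall (fun x hx => hCv x (Set.Ioc_subset_Icc_self hx)))
  have hv2i : IntegrableOn (fun t => v t ^ 2) (Set.Ioc τ₁ τ₂) := by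
    have := hvi.bdd_mul hvmeas ((ae_restrict_iff' measurableSet_Ioc).2
      (Filter.Eventually.of_forall (fun x hx => hCv x (Set.Ioc_subset_Icc_self hx))))
    exact this.congr (Filter.Eventually.of_forall (fun x => by ring))
  have hwvi : IntegrableOn (fun t => v t * w t) (Set.Ioc τ₁ τ₂) := by
    exact hwi.bdd_mul hvmeas ((ae_restrict_iff' measurableSet_Ioc).2
      (Filter.Eventually.of_forall (fun x hx => hCv x (Set.Ioc_subset_Icc_self hx))))
  have hφi : IntegrableOn φ (Set.Ioc τ₁ τ₂) := by rw [hφ]; exact hwi.sub hvi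
  have hφ2i : IntegrableOn (fun t => φ t ^ 2) (Set.Ioc τ₁ τ₂) := by
    have h1 : IntegrableOn (fun t => w t ^ 2 - 2 * (v t * w t) + v t ^ 2) (Set.Ioc τ₁ τ₂) :=
      (hw2i.sub (hwvi.const_mul 2)).add hv2i
    exact h1.congr (Filter.Eventually.of_forall (fun x => by simp only [hφ]; ring))
  have hvφi : IntegrableOn (fun t => v t * φ t) (Set.Ioc τ₁ τ₂) := by
    have h1 : IntegrableOn (fun t => v t * w t - v t ^ 2) (Set.Ioc τ₁ τ₂) := hwvi.sub hv2i
    exact h1.congr (Filter.Eventually.of_forall (fun x => by simp only [hφ]; ring))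
  -- the fundamental pointwise identity: v t = ε + ρ Φ t on [τ₁, τ₂]
  have hI1 : ∀ t ∈ Set.Icc τ₁ τ₂, v t = ε + ρ * Φ t := by
    intro t ht
    have hts : Set.Ioc τ₁ t ⊆ Set.Ioc τ₁ τ₂ := Set.Ioc_subset_Ioc le_rfl ht.2
    have hIccsub : Set.Icc τ₁ t ⊆ Set.Icc τ₁ τ₂ := Set.Icc_subset_Icc le_rfl ht.2
    have hhsub : IntegrableOn (fun s => w s * Real.exp (ρ * (s - τ₁))) (Set.Ioc τ₁ t) :=
      hhi.mono_set hts
    have husub : IntegrableOn (fun s => Real.exp (-ρ * (s - τ₁))) (Set.Ioc τ₁ t) :=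
      huc.integrableOn_Ioc
    have hWint : IntervalIntegrable w volume τ₁ t := by
      rw [intervalIntegrable_iff_integrableOn_Ioc_of_le ht.1]; exact hwi.mono_set hts
    have hhint : IntervalIntegrable (fun s => w s * Real.exp (ρ * (s - τ₁))) volume τ₁ t := by
      rw [intervalIntegrable_iff_integrableOn_Ioc_of_le ht.1]; exact hhsub
    have hvint : IntervalIntegrable v volume τ₁ t := by
      apply ContinuousOn.intervalIntegrable
      rw [Set.uIcc_of_le ht.1]
      exact hvcont.mono hIccsub
    have hswap := swap_tri ht.1 hhsub husub
    have hinner : (fun r => (w r * Real.exp (ρ * (r - τ₁))) * (∫ s in r..t, Real.exp (-ρ * (s - τ₁))))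
        = fun r => (w r - (w r * Real.exp (ρ * (r - τ₁))) * Real.exp (-ρ * (t - τ₁))) / ρ := by
      funext r
      rw [int_exp_neg hρ.ne' τ₁ r t]
      have h1 : Real.exp (ρ * (r - τ₁)) * Real.exp (-ρ * (r - τ₁)) = 1 := by
        rw [← Real.exp_add, show ρ * (r - τ₁) + -ρ * (r - τ₁) = 0 by ring, Real.exp_zero]
      simp only [neg_mul] at h1 ⊢
      field_simp
      linear_combination (w r) * h1
    rw [hinner] at hswap
    have hQ : ∫ r in τ₁..t,
        (w r - (w r * Real.exp (ρ * (r - τ₁))) * Real.exp (-ρ * (t - τ₁))) / ρ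
        = ((∫ r in τ₁..t, w r)
            - (∫ r in τ₁..t, w r * Real.exp (ρ * (r - τ₁))) * Real.exp (-ρ * (t - τ₁))) / ρ := by
      rw [intervalIntegral.integral_div,
        intervalIntegral.integral_sub hWint (hhint.mul_const _),
        intervalIntegral.integral_mul_const]
    rw [hQ] at hswap
    have hvsplit : ∫ s in τ₁..t, v s
        = ε * (∫ s in τ₁..t, Real.exp (-ρ * (s - τ₁)))
          + ρ * ∫ s in τ₁..t, Real.exp (-ρ * (s - τ₁))
              * ∫ r in τ₁..s, w r * Real.exp (ρ * (r - τ₁)) := by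
      have hfun : v = fun s => ε * Real.exp (-ρ * (s - τ₁))
          + ρ * (Real.exp (-ρ * (s - τ₁)) * ∫ r in τ₁..s, w r * Real.exp (ρ * (r - τ₁))) := by
        funext s; simp only [hv]; ring
      rw [hfun, intervalIntegral.integral_add (μ := volume)
        ((huc.intervalIntegrable τ₁ t).const_mul ε)
        (by
          apply IntervalIntegrable.const_mul
          apply ContinuousOn.intervalIntegrable
          rw [Set.uIcc_of_le ht.1]
          exact (huc.continuousOn).mul (hHcont.mono hIccsub)),
        intervalIntegral.integral_const_mul, intervalIntegral.integral_const_mul]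
    have hu_t : ∫ s in τ₁..t, Real.exp (-ρ * (s - τ₁))
        = (1 - Real.exp (-ρ * (t - τ₁))) / ρ := by
      rw [int_exp_neg hρ.ne' τ₁ τ₁ t, show -ρ * (τ₁ - τ₁) = 0 by ring, Real.exp_zero]
    have hΦt : Φ t = (∫ s in τ₁..t, w s) - ∫ s in τ₁..t, v s := by
      simp only [hΦdef, hφ]
      exact intervalIntegral.integral_sub hWint hvint
    simp only [hv]
    rw [hΦt, hvsplit, hu_t, hswap]
    field_simp
    ring
  -- value of v at τ₂ from the constraint
  have hvb : v τ₂ = ε * (1 + Real.sqrt 2) := by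
    have hsq2 : (0:ℝ) < 1 + Real.sqrt 2 := by positivity
    simp only [hv]
    rw [hcon]
    have h1 : ε + ρ * (ε * (Real.exp (ρ * (τ₃ - τ₁)) - 1) / ρ)
        = ε * Real.exp (ρ * (τ₃ - τ₁)) := by field_simp; ring
    rw [h1, mul_assoc, ← Real.exp_add,
      show ρ * (τ₃ - τ₁) + -ρ * (τ₂ - τ₁) = ρ * (τ₃ - τ₂) by ring,
      show ρ * (τ₃ - τ₂) = Real.log (1 + Real.sqrt 2) by rw [hτ₃]; field_simp; ring,
      Real.exp_log hsq2]
  have hI1b := hI1 τ₂ (Set.right_mem_Icc.2 hab)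
  have hΦb : ρ * Φ τ₂ = Real.sqrt 2 * ε := by linear_combination hvb - hI1b
  -- boundedness and integrability of Φ
  have hφIcc : IntegrableOn φ (Set.Icc τ₁ τ₂) := by
    rwa [integrableOn_Icc_iff_integrableOn_Ioc]
  have hΦcont : ContinuousOn Φ (Set.Icc τ₁ τ₂) := by
    have := intervalIntegral.continuousOn_primitive_interval (a := τ₁) (b := τ₂)
      (μ := volume) (f := φ) (by rwa [Set.uIcc_of_le hab])
    rw [Set.uIcc_of_le hab] at this
    rw [hΦdef]
    exact this
  have hΦmeas : AEStronglyMeasurable Φ (volume.restrict (Set.Ioc τ₁ τ₂)) :=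
    (hΦcont.mono Set.Ioc_subset_Icc_self).aestronglyMeasurable measurableSet_Ioc
  obtain ⟨CΦ, hCΦ⟩ : ∃ C, ∀ x ∈ Set.Icc τ₁ τ₂, ‖Φ x‖ ≤ C := by
    obtain ⟨m, -, hm⟩ := isCompact_Icc.exists_isMaxOn (s := Set.Icc τ₁ τ₂)
      ⟨τ₁, Set.left_mem_Icc.2 hab⟩ hΦcont.norm
    exact ⟨‖Φ m‖, fun x hx => hm hx⟩
  have hφΦi : IntegrableOn (fun t => φ t * Φ t) (Set.Ioc τ₁ τ₂) := by
    have := hφi.bdd_mul hΦmeas ((ae_restrict_iff' measurableSet_Ioc).2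
      (Filter.Eventually.of_forall (fun x hx => hCΦ x (Set.Ioc_subset_Icc_self hx))))
    exact this.congr (Filter.Eventually.of_forall (fun x => mul_comm _ _))
  have hφint : IntervalIntegrable φ volume τ₁ τ₂ := by
    rw [intervalIntegrable_iff_integrableOn_Ioc_of_le hab]; exact hφi
  have hφΦint : IntervalIntegrable (fun t => φ t * Φ t) volume τ₁ τ₂ := by
    rw [intervalIntegrable_iff_integrableOn_Ioc_of_le hab]; exact hφΦi
  -- the quadratic identity ∫ φ Φ = Φ(τ₂)²/2
  have hL1 : ∫ t in τ₁..τ₂, φ t * Φ t = Φ τ₂ ^ 2 / 2 := by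
    have hswap2 := swap_tri hab hφi hφi
    have hrhs : ∫ s in τ₁..τ₂, φ s * (∫ t in s..τ₂, φ t)
        = ∫ s in τ₁..τ₂, (Φ τ₂ * φ s - φ s * Φ s) := by
      rw [intervalIntegral.integral_of_le hab, intervalIntegral.integral_of_le hab]
      refine setIntegral_congr_fun measurableSet_Ioc (fun s hs => ?_)
      have hsub : IntervalIntegrable φ volume τ₁ s := by
        rw [intervalIntegrable_iff_integrableOn_Ioc_of_le hs.1.le]
        exact hφi.mono_set (Set.Ioc_subset_Ioc le_rfl hs.2)
      have h2 : ∫ t in s..τ₂, φ t = Φ τ₂ - Φ s := by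
        rw [← intervalIntegral.integral_interval_sub_left hφint hsub, hΦdef]
      rw [h2]; ring
    rw [hrhs] at hswap2
    rw [intervalIntegral.integral_sub ((hφint.const_mul _)) hφΦint,
      intervalIntegral.integral_const_mul] at hswap2
    have hΦτ : ∫ s in τ₁..τ₂, φ s = Φ τ₂ := (congrFun hΦdef τ₂).symm
    rw [hΦτ] at hswap2
    simp only [hΦdef]
    simp only [hΦdef] at hswap2
    linarith [hswap2]
  -- value of ∫ v φ
  have hvφint : IntervalIntegrable (fun t => v t * φ t) volume τ₁ τ₂ := by
    rw [intervalIntegrable_iff_integrableOn_Ioc_of_le hab]; exact hvφi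
  have hφ2int : IntervalIntegrable (fun t => φ t ^ 2) volume τ₁ τ₂ := by
    rw [intervalIntegrable_iff_integrableOn_Ioc_of_le hab]; exact hφ2i
  have hvφ_val : ∫ t in τ₁..τ₂, v t * φ t = ε * Φ τ₂ + ρ * (Φ τ₂ ^ 2 / 2) := by
    have hcong : ∫ t in τ₁..τ₂, v t * φ t
        = ∫ t in τ₁..τ₂, (ε * φ t + ρ * (φ t * Φ t)) := by
      rw [intervalIntegral.integral_of_le hab, intervalIntegral.integral_of_le hab]
      refine setIntegral_congr_fun measurableSet_Ioc (fun t ht => ?_)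
      rw [hI1 t (Set.Ioc_subset_Icc_self ht)]; ring
    rw [hcong, intervalIntegral.integral_add (hφint.const_mul ε) (hφΦint.const_mul ρ),
      intervalIntegral.integral_const_mul, intervalIntegral.integral_const_mul, hL1,
      show (∫ s in τ₁..τ₂, φ s) = Φ τ₂ from (congrFun hΦdef τ₂).symm]
  -- the main decomposition of the quadratic functional
  have hmain : ∫ t in τ₁..τ₂,
        (ρ * w t ^ 2 -
          ρ * w t * (ε + ρ * ∫ s in τ₁..t, w s * Real.exp (ρ * (s - τ₁)))
            * Real.exp (-ρ * (t - τ₁)))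
      = ρ * (∫ t in τ₁..τ₂, φ t ^ 2) + ρ * ∫ t in τ₁..τ₂, v t * φ t := by
    have hfun : (fun t => ρ * w t ^ 2 -
          ρ * w t * (ε + ρ * ∫ s in τ₁..t, w s * Real.exp (ρ * (s - τ₁)))
            * Real.exp (-ρ * (t - τ₁)))
        = fun t => ρ * φ t ^ 2 + ρ * (v t * φ t) := by
      funext t; simp only [hφ, hv]; ring
    rw [hfun, intervalIntegral.integral_add (hφ2int.const_mul ρ) (hvφint.const_mul ρ),
      intervalIntegral.integral_const_mul, intervalIntegral.integral_const_mul]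
  -- quantities for the final estimate
  obtain ⟨S, hSdef⟩ : ∃ S : ℝ, S = ∫ t in Set.Ioc τ₁ τ₂, φ t ^ 2 := ⟨_, rfl⟩
  obtain ⟨J, hJdef⟩ : ∃ J : ℝ, J = ∫ t in Set.Ioc τ₁ τ₂, |φ t| := ⟨_, rfl⟩

  have hS0 : 0 ≤ S := hSdef ▸ setIntegral_nonneg measurableSet_Ioc (fun x _ => sq_nonneg _)
  have hJ0 : 0 ≤ J := hJdef ▸ setIntegral_nonneg measurableSet_Ioc (fun x _ => abs_nonneg _)
  have hφabsi : IntegrableOn (fun t => |φ t|) (Set.Ioc τ₁ τ₂) := hφi.abs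
  have hvolL : (volume (Set.Ioc τ₁ τ₂)).toReal = L := by
    rw [Real.volume_Ioc, ENNReal.toReal_ofReal hL0.le]
  have hCS : J ^ 2 ≤ L * S := by
    refine cs_bound hL0 hS0 hJ0 (fun l hl => ?_)
    have hpt : ∀ x ∈ Set.Ioc τ₁ τ₂, |φ x| ≤ φ x ^ 2 / (2 * l) + l / 2 := by
      intro x _
      have h1 : 0 ≤ (|φ x| - l) ^ 2 := sq_nonneg _
      have h2 : |φ x| ^ 2 = φ x ^ 2 := sq_abs _
      have h3 : 0 < 2 * l := by positivity
      have h4 : |φ x| * (2 * l) ≤ φ x ^ 2 + l * l := by nlinarith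
      have h5 : |φ x| ≤ (φ x ^ 2 + l * l) / (2 * l) := (le_div_iff₀ h3).2 h4
      have h6 : (φ x ^ 2 + l * l) / (2 * l) = φ x ^ 2 / (2 * l) + l / 2 := by
        field_simp
      rw [← h6]; exact h5
    have hmono : ∫ t in Set.Ioc τ₁ τ₂, |φ t|
        ≤ ∫ t in Set.Ioc τ₁ τ₂, (φ t ^ 2 / (2 * l) + l / 2) :=
      setIntegral_mono_on hφabsi ((hφ2i.div_const (2 * l)).add (integrable_const (l / 2)))
        measurableSet_Ioc hpt
    have heval : ∫ t in Set.Ioc τ₁ τ₂, (φ t ^ 2 / (2 * l) + l / 2)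
        = S / (2 * l) + l * L / 2 := by
      rw [integral_add (hφ2i.div_const _) (integrable_const _), integral_div,
        setIntegral_const, measureReal_def, hvolL, smul_eq_mul, hSdef]
      ring
    rw [heval] at hmono
    rw [hJdef]
    exact hmono
  have hΦle : ∀ t ∈ Set.Icc τ₁ τ₂, |Φ t| ≤ J := by
    intro t ht
    have h1 : |Φ t| ≤ ∫ s in τ₁..t, |φ s| := by
      rw [hΦdef]
      exact intervalIntegral.abs_integral_le_integral_abs ht.1
    have h2 : ∫ s in τ₁..t, |φ s| ≤ J := by
      rw [hJdef, intervalIntegral.integral_of_le ht.1]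
      refine setIntegral_mono_set hφabsi
        (Filter.Eventually.of_forall (fun x => abs_nonneg _)) ?_
      exact Filter.Eventually.of_forall (Set.Ioc_subset_Ioc le_rfl ht.2)
    exact h1.trans h2
  have hv2le : ∫ t in Set.Ioc τ₁ τ₂, v t ^ 2 ≤ L * (2 * ε ^ 2 + 2 * ρ ^ 2 * (L * S)) := by
    have hpt : ∀ x ∈ Set.Ioc τ₁ τ₂, v x ^ 2 ≤ 2 * ε ^ 2 + 2 * ρ ^ 2 * (L * S) := by
      intro x hx
      have h1 := hI1 x (Set.Ioc_subset_Icc_self hx)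
      have h2 := hΦle x (Set.Ioc_subset_Icc_self hx)
      have h3 : Φ x ^ 2 ≤ J ^ 2 := by
        rw [← sq_abs (Φ x)]
        exact pow_le_pow_left₀ (abs_nonneg _) h2 2
      have h4 : Φ x ^ 2 ≤ L * S := h3.trans hCS
      rw [h1]
      nlinarith [sq_nonneg (ε - ρ * Φ x), sq_nonneg (ε + ρ * Φ x), sq_nonneg ρ, sq_nonneg (ρ * Φ x)]
    calc ∫ t in Set.Ioc τ₁ τ₂, v t ^ 2
        ≤ ∫ _ in Set.Ioc τ₁ τ₂, (2 * ε ^ 2 + 2 * ρ ^ 2 * (L * S)) :=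
          setIntegral_mono_on hv2i (integrable_const _) measurableSet_Ioc hpt
      _ = L * (2 * ε ^ 2 + 2 * ρ ^ 2 * (L * S)) := by
          rw [setIntegral_const, measureReal_def, hvolL, smul_eq_mul]
  have hIw : ∫ t in Set.Ioc τ₁ τ₂, w t ^ 2
      ≤ 2 * S + 2 * (L * (2 * ε ^ 2 + 2 * ρ ^ 2 * (L * S))) := by
    have hpt : ∀ x ∈ Set.Ioc τ₁ τ₂, w x ^ 2 ≤ 2 * φ x ^ 2 + 2 * v x ^ 2 := by
      intro x _
      have : w x = φ x + v x := by simp [hφ]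
      rw [this]
      nlinarith [sq_nonneg (φ x - v x)]
    have h1 := setIntegral_mono_on hw2i ((hφ2i.const_mul 2).add (hv2i.const_mul 2))
      measurableSet_Ioc hpt
    simp only [Pi.add_apply] at h1
    rw [integral_add (hφ2i.const_mul 2) (hv2i.const_mul 2), integral_const_mul,
      integral_const_mul] at h1
    have h2 := hv2le
    linarith [h1, h2]
  -- finish
  rw [hmain, hvφ_val]
  have hfin1 : ∫ t in τ₁..τ₂, w t ^ 2 = ∫ t in Set.Ioc τ₁ τ₂, w t ^ 2 :=
    intervalIntegral.integral_of_le hab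
  have hfin2 : ∫ t in τ₁..τ₂, φ t ^ 2 = S := by
    rw [hSdef, intervalIntegral.integral_of_le hab]
  rw [hfin1, hfin2]
  have hsq2 : Real.sqrt 2 ^ 2 = 2 := Real.sq_sqrt (by norm_num)
  have hΦv : ρ * (ε * Φ τ₂ + ρ * (Φ τ₂ ^ 2 / 2)) = Real.sqrt 2 * ε ^ 2 + ε ^ 2 := by
    calc ρ * (ε * Φ τ₂ + ρ * (Φ τ₂ ^ 2 / 2))
        = ε * (ρ * Φ τ₂) + (ρ * Φ τ₂) ^ 2 / 2 := by ring
      _ = ε * (Real.sqrt 2 * ε) + (Real.sqrt 2 * ε) ^ 2 / 2 := by rw [hΦb]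
      _ = Real.sqrt 2 * ε ^ 2 + ε ^ 2 := by rw [mul_pow, hsq2]; ring
  rw [hΦv]
  have hpos1 : (0:ℝ) < 1 + 4 * L := by positivity
  have hpos2 : (0:ℝ) < 2 + 4 * ρ ^ 2 * L ^ 2 := by positivity
  have hc0 : (0:ℝ) ≤ min (2 / (1 + 4 * L)) (ρ / (2 + 4 * ρ ^ 2 * L ^ 2)) :=
    le_min (by positivity) (by positivity)
  have hc1 : min (2 / (1 + 4 * L)) (ρ / (2 + 4 * ρ ^ 2 * L ^ 2)) * (1 + 4 * L) ≤ 2 :=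
    (le_div_iff₀ hpos1).1 (min_le_left _ _)
  have hc2 : min (2 / (1 + 4 * L)) (ρ / (2 + 4 * ρ ^ 2 * L ^ 2)) * (2 + 4 * ρ ^ 2 * L ^ 2) ≤ ρ :=
    (le_div_iff₀ hpos2).1 (min_le_right _ _)
  have hmul2 := mul_le_mul_of_nonneg_right hc1 (sq_nonneg ε)
  have hmul3 := mul_le_mul_of_nonneg_right hc2 hS0
  have e1 : min (2 / (1 + 4 * L)) (ρ / (2 + 4 * ρ ^ 2 * L ^ 2))
        * (ε ^ 2 + ∫ t in Set.Ioc τ₁ τ₂, w t ^ 2)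
      ≤ min (2 / (1 + 4 * L)) (ρ / (2 + 4 * ρ ^ 2 * L ^ 2))
        * (ε ^ 2 + (2 * S + 2 * (L * (2 * ε ^ 2 + 2 * ρ ^ 2 * (L * S))))) :=
    mul_le_mul_of_nonneg_left (by linarith [hIw]) hc0
  have e2 : min (2 / (1 + 4 * L)) (ρ / (2 + 4 * ρ ^ 2 * L ^ 2))
        * (ε ^ 2 + (2 * S + 2 * (L * (2 * ε ^ 2 + 2 * ρ ^ 2 * (L * S)))))
      = min (2 / (1 + 4 * L)) (ρ / (2 + 4 * ρ ^ 2 * L ^ 2)) * (1 + 4 * L) * ε ^ 2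
        + min (2 / (1 + 4 * L)) (ρ / (2 + 4 * ρ ^ 2 * L ^ 2)) * (2 + 4 * ρ ^ 2 * L ^ 2) * S := by
    ring
  rw [e2] at e1
  have e4 : ε ^ 2 * (1 + Real.sqrt 2 * uS) = ε ^ 2 + Real.sqrt 2 * uS * ε ^ 2 := by ring
  have e5 : 0 ≤ Real.sqrt 2 * uS * ε ^ 2 :=
    mul_nonneg (mul_nonneg (Real.sqrt_nonneg 2) huS0.le) (sq_nonneg ε)
  have e6 : 0 ≤ Real.sqrt 2 * ε ^ 2 := mul_nonneg (Real.sqrt_nonneg 2) (sq_nonneg ε)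
  linarith [e1, hmul2, hmul3, e5, e6, mul_le_mul_of_nonneg_right hc2 hS0, e4.le, e4.ge]
end
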